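/- Let σx = !![0, 1; 1, 0], σy = !![0, −i; i, 0], σz = !![1, 0; 0, −1] be the 2×2 Pauli matrices over ℂ. The real Lie subalgebra of the 2×2 complex matrices generated by {Complex.I • σx, Complex.I • σz} equals the set of traceless skew-adjoint 2×2 matrices (i.e. su(2)); in particular it contains Complex.I • σy. -/

import Mathlib

open Matrix

attribute [local instance 100] LieRing.ofAssociativeRing

/-- The Pauli matrix `σx`. -/
noncomputable def sigmaX : Matrix (Fin 2) (Fin 2) ℂ := !![0, 1; 1, 0]

/-- The Pauli matrix `σy`. -/
noncomputable def sigmaY : Matrix (Fin 2) (Fin 2) ℂ := !![0, -Complex.I; Complex.I, 0]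

/-- The Pauli matrix `σz`. -/
noncomputable def sigmaZ : Matrix (Fin 2) (Fin 2) ℂ := !![1, 0; 0, -1]

/-- su(2) as a real Lie subalgebra of 2×2 complex matrices. -/
noncomputable def su2 : LieSubalgebra ℝ (Matrix (Fin 2) (Fin 2) ℂ) where
  carrier := {A | Aᴴ = -A ∧ A.trace = 0}
  add_mem' := by
    rintro A B ⟨hA1, hA2⟩ ⟨hB1, hB2⟩
    refine ⟨?_, ?_⟩ <;> simp [conjTranspose_add, trace_add, hA1, hA2, hB1, hB2, neg_add] <;> abel
  zero_mem' := by simp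
  smul_mem' := by
    rintro c A ⟨h1, h2⟩
    refine ⟨?_, ?_⟩
    · ext i j
      have := congrFun (congrFun h1 i) j
      simp [conjTranspose_apply] at this ⊢
      rw [this]; ring
    · simp [trace_smul, h2]
  lie_mem' := by
    rintro A B ⟨hA1, hA2⟩ ⟨hB1, hB2⟩
    rw [Set.mem_setOf_eq, Ring.lie_def]
    constructor
    · simp [conjTranspose_sub, conjTranspose_mul, hA1, hB1, mul_neg, neg_mul]
    · simp [trace_sub, trace_mul_comm A B]

/-- The real Lie subalgebra of the `2×2` complex matrices generated by `{i σx, i σz}`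
equals `su(2)`, the set of traceless skew-adjoint matrices; in particular it contains
`i σy`. -/
theorem lieSpan_pauli_eq_su2 :
    (∀ A : Matrix (Fin 2) (Fin 2) ℂ,
      A ∈ LieSubalgebra.lieSpan ℝ (Matrix (Fin 2) (Fin 2) ℂ)
          {Complex.I • sigmaX, Complex.I • sigmaZ} ↔
        (Aᴴ = -A ∧ A.trace = 0)) ∧
    Complex.I • sigmaY ∈ LieSubalgebra.lieSpan ℝ (Matrix (Fin 2) (Fin 2) ℂ)
      {Complex.I • sigmaX, Complex.I • sigmaZ} := by
  set S : Set (Matrix (Fin 2) (Fin 2) ℂ) := {Complex.I • sigmaX, Complex.I • sigmaZ} with hS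
  have hx : Complex.I • sigmaX ∈ LieSubalgebra.lieSpan ℝ _ S :=
    LieSubalgebra.subset_lieSpan (by simp [hS])
  have hz : Complex.I • sigmaZ ∈ LieSubalgebra.lieSpan ℝ _ S :=
    LieSubalgebra.subset_lieSpan (by simp [hS])
  have hy : Complex.I • sigmaY ∈ LieSubalgebra.lieSpan ℝ _ S := by
    have hb := (LieSubalgebra.lieSpan ℝ _ S).lie_mem hx hz
    have hsm := (LieSubalgebra.lieSpan ℝ _ S).smul_mem ((1:ℝ)/2) hb
    have heq : ((1:ℝ)/2) • ⁅Complex.I • sigmaX, Complex.I • sigmaZ⁆ = Complex.I • sigmaY := by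
      rw [Ring.lie_def]
      ext i j
      fin_cases i <;> fin_cases j <;>
        simp [sigmaX, sigmaY, sigmaZ, Matrix.mul_apply, Fin.sum_univ_two] <;> ring
    rwa [heq] at hsm
  refine ⟨fun A => ⟨fun hA => ?_, fun ⟨h1, h2⟩ => ?_⟩, hy⟩
  · have hle : LieSubalgebra.lieSpan ℝ _ S ≤ su2 := by
      rw [LieSubalgebra.lieSpan_le]
      rintro M (rfl | rfl) <;>
      · constructor
        · ext i j
          fin_cases i <;> fin_cases j <;>
            simp [sigmaX, sigmaZ, conjTranspose_apply]
        · simp [trace, sigmaX, sigmaZ, Fin.sum_univ_two]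
    exact hle hA
  · -- decompose A
    have h00 := congrFun (congrFun h1 0) 0
    have h01 := congrFun (congrFun h1 1) 0
    have h11 := congrFun (congrFun h1 1) 1
    simp [conjTranspose_apply] at h00 h01 h11
    have htr : A 0 0 + A 1 1 = 0 := by simpa [trace, Fin.sum_univ_two] using h2
    have hdecomp : A = (A 0 1).im • (Complex.I • sigmaX) + (A 0 1).re • (Complex.I • sigmaY)
        + (A 0 0).im • (Complex.I • sigmaZ) := by
      ext i j
      fin_cases i <;> fin_cases j
      · simp [sigmaX, sigmaY, sigmaZ, Complex.real_smul]
        apply Complex.ext <;> simp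
        · have := congrArg Complex.re h00
          simp at this
          linarith
      · simp [sigmaX, sigmaY, sigmaZ, Complex.real_smul]
        apply Complex.ext <;> simp
      · simp [sigmaX, sigmaY, sigmaZ, Complex.real_smul]
        apply Complex.ext <;> simp
        · have := congrArg Complex.re h01
          simp at this
          linarith
        · have := congrArg Complex.im h01
          simp at this
          linarith
      · simp [sigmaX, sigmaY, sigmaZ, Complex.real_smul]
        apply Complex.ext <;> simp
        · have h1' := congrArg Complex.re htr
          have h2' := congrArg Complex.re h00
          simp at h1' h2'
          linarith
        · have h1' := congrArg Complex.im htr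
          have h2' := congrArg Complex.im h00
          simp at h1' h2'
          linarith
    rw [hdecomp]
    exact (LieSubalgebra.lieSpan ℝ _ S).add_mem
      ((LieSubalgebra.lieSpan ℝ _ S).add_mem
        ((LieSubalgebra.lieSpan ℝ _ S).smul_mem _ hx)
        ((LieSubalgebra.lieSpan ℝ _ S).smul_mem _ hy))
      ((LieSubalgebra.lieSpan ℝ _ S).smul_mem _ hz)
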